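/- arXiv:math/0107145 — 2 statements merged into one kernel-verified Lean document; each statement's English description precedes it below -/
import Mathlib

section
/- For all real numbers X > 1 and Y > 1, ∑_{m≥1} ∑_{n≥1} gcd(m,n)·X^{-m}·Y^{-n} = ∑_{k≥1} φ(k)/((X^k - 1)(Y^k - 1)), and both series converge absolutely. -/
open scoped BigOperators

lemma aux_facts {X : ℝ} (hX : 1 < X) (k : ℕ) :
    0 ≤ (X⁻¹) ^ (k+1) ∧ (X⁻¹) ^ (k+1) < 1 ∧ 0 < X ^ (k+1) - 1 ∧
      (X⁻¹) ^ (k+1) / (1 - (X⁻¹) ^ (k+1)) = (X ^ (k+1) - 1)⁻¹ := by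
  have hX0 : (0:ℝ) < X := lt_trans one_pos hX
  have hA : 1 < X ^ (k+1) := one_lt_pow₀ hX (Nat.succ_ne_zero k)
  have hA0 : (0:ℝ) < X ^ (k+1) := lt_trans one_pos hA
  have hs : (X⁻¹) ^ (k+1) = (X ^ (k+1))⁻¹ := by rw [inv_pow]
  refine ⟨by positivity, ?_, by linarith, ?_⟩
  · rw [hs]
    exact inv_lt_one_of_one_lt₀ hA
  · rw [hs]
    have h1 : X ^ (k+1) ≠ 0 := ne_of_gt hA0
    have h2 : X ^ (k+1) - 1 ≠ 0 := ne_of_gt (by linarith)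
    field_simp

lemma geo_shift {s : ℝ} (h0 : 0 ≤ s) (h1 : s < 1) :
    Summable (fun a : ℕ => s ^ (a + 1)) ∧ ∑' a : ℕ, s ^ (a + 1) = s / (1 - s) := by
  have hg : Summable (fun a : ℕ => s ^ a) := summable_geometric_of_lt_one h0 h1
  have he : (fun a : ℕ => s ^ (a+1)) = fun a : ℕ => s * s ^ a := by
    funext a; rw [pow_succ, mul_comm]
  refine ⟨he ▸ hg.mul_left s, ?_⟩
  rw [he, tsum_mul_left, tsum_geometric_of_lt_one h0 h1, div_eq_mul_inv]

lemma geo_coeff {r : ℝ} (h0 : 0 ≤ r) (h1 : r < 1) :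
    Summable (fun k : ℕ => (k + 1 : ℝ) * r ^ (k + 1)) := by
  have h : Summable (fun n : ℕ => (n : ℝ) ^ 1 * r ^ n) :=
    summable_pow_mul_geometric_of_norm_lt_one 1 (by rwa [Real.norm_eq_abs, abs_of_nonneg h0])
  have := h.comp_injective Nat.succ_injective
  refine this.congr fun k => ?_
  simp [Function.comp, pow_one]

lemma prod_mul_lemma {u v : ℕ → ℝ} (hu : Summable u) (hv : Summable v)
    (hu0 : ∀ a, 0 ≤ u a) (hv0 : ∀ b, 0 ≤ v b) :
    Summable (fun p : ℕ × ℕ => u p.1 * v p.2) ∧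
    ∑' p : ℕ × ℕ, u p.1 * v p.2 = (∑' a : ℕ, u a) * (∑' b : ℕ, v b) := by
  have hs : Summable (fun p : ℕ × ℕ => u p.1 * v p.2) :=
    hu.mul_of_nonneg hv hu0 hv0
  have hslice : ∀ a : ℕ, Summable (fun c : ℕ => u (a, c).1 * v (a, c).2) := by
    intro a; dsimp only; exact hv.mul_left _
  refine ⟨hs, ?_⟩
  rw [Summable.tsum_prod' hs hslice]
  dsimp only
  calc ∑' (a : ℕ), ∑' (b : ℕ), u a * v b
      = ∑' (a : ℕ), u a * ∑' (b : ℕ), v b := tsum_congr fun a => tsum_mul_left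
    _ = _ := tsum_mul_right

noncomputable def Gf (X Y : ℝ) (p : ℕ × ℕ) : ℝ :=
  (Nat.gcd (p.1+1) (p.2+1) : ℝ) * ((X⁻¹) ^ (p.1+1) * (Y⁻¹) ^ (p.2+1))

noncomputable def Rf (X Y : ℝ) (k : ℕ) : ℝ :=
  (Nat.totient (k+1) : ℝ) * ((X ^ (k+1) - 1)⁻¹ * (Y ^ (k+1) - 1)⁻¹)

noncomputable def Ff (X Y : ℝ) (t : ℕ × ℕ × ℕ) : ℝ :=
  (Nat.totient (t.1+1) : ℝ) *
    ((X⁻¹) ^ ((t.1+1)*(t.2.1+1)) * (Y⁻¹) ^ ((t.1+1)*(t.2.2+1)))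

def divEquiv : (Σ p : ℕ × ℕ, {d : ℕ // d ∈ (Nat.gcd (p.1+1) (p.2+1)).divisors}) ≃ (ℕ × ℕ × ℕ) where
  toFun q := ((q.2 : ℕ) - 1, (q.1.1 + 1) / (q.2 : ℕ) - 1, (q.1.2 + 1) / (q.2 : ℕ) - 1)
  invFun t := ⟨((t.1+1) * (t.2.1+1) - 1, (t.1+1) * (t.2.2+1) - 1),
    ⟨t.1 + 1, by
      rw [Nat.mem_divisors]
      have h1 : (t.1+1) * (t.2.1+1) - 1 + 1 = (t.1+1) * (t.2.1+1) :=
        Nat.sub_add_cancel (Nat.mul_pos (Nat.succ_pos _) (Nat.succ_pos _))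
      have h2 : (t.1+1) * (t.2.2+1) - 1 + 1 = (t.1+1) * (t.2.2+1) :=
        Nat.sub_add_cancel (Nat.mul_pos (Nat.succ_pos _) (Nat.succ_pos _))
      rw [h1, h2]
      exact ⟨Nat.dvd_gcd (dvd_mul_right _ _) (dvd_mul_right _ _),
        Nat.gcd_ne_zero_left (Nat.mul_ne_zero (Nat.succ_ne_zero _) (Nat.succ_ne_zero _))⟩⟩⟩
  left_inv := by
    rintro ⟨⟨m, n⟩, d, hd⟩
    rw [Nat.mem_divisors] at hd
    obtain ⟨hdvd, hg0⟩ := hd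
    have hd0 : 0 < d := Nat.pos_of_ne_zero (by rintro rfl; exact hg0 (Nat.eq_zero_of_zero_dvd hdvd))
    have hdm : d ∣ m + 1 := hdvd.trans (Nat.gcd_dvd_left _ _)
    have hdn : d ∣ n + 1 := hdvd.trans (Nat.gcd_dvd_right _ _)
    have h1 : d - 1 + 1 = d := Nat.sub_add_cancel hd0
    have hm1 : (m+1)/d - 1 + 1 = (m+1)/d :=
      Nat.sub_add_cancel ((Nat.one_le_div_iff hd0).mpr (Nat.le_of_dvd (Nat.succ_pos m) hdm))
    have hn1 : (n+1)/d - 1 + 1 = (n+1)/d :=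
      Nat.sub_add_cancel ((Nat.one_le_div_iff hd0).mpr (Nat.le_of_dvd (Nat.succ_pos n) hdn))
    apply Sigma.subtype_ext
    · show (_, _) = (m, n)
      rw [h1, hm1, hn1, Nat.mul_div_cancel' hdm, Nat.mul_div_cancel' hdn]
      simp
    · exact h1
  right_inv := by
    rintro ⟨k, a, b⟩
    have h1 : (k+1) * (a+1) - 1 + 1 = (k+1) * (a+1) :=
      Nat.sub_add_cancel (Nat.mul_pos (Nat.succ_pos _) (Nat.succ_pos _))
    have h2 : (k+1) * (b+1) - 1 + 1 = (k+1) * (b+1) :=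
      Nat.sub_add_cancel (Nat.mul_pos (Nat.succ_pos _) (Nat.succ_pos _))
    dsimp only
    rw [h1, h2, Nat.mul_div_cancel_left _ (Nat.succ_pos k), Nat.mul_div_cancel_left _ (Nat.succ_pos k)]
    simp

lemma slice_lemma {X Y : ℝ} (hX : 1 < X) (hY : 1 < Y) (k : ℕ) :
    Summable (fun p : ℕ × ℕ => Ff X Y (k, p)) ∧
    (∑' p : ℕ × ℕ, Ff X Y (k, p)) = Rf X Y k := by
  obtain ⟨hs0, hs1, hXk, hsval⟩ := aux_facts hX k
  obtain ⟨ht0, ht1, hYk, htval⟩ := aux_facts hY k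
  have hu := geo_shift hs0 hs1
  have hv := geo_shift ht0 ht1
  have he : ∀ p : ℕ × ℕ, Ff X Y (k, p) = (Nat.totient (k+1) : ℝ) *
      (((X⁻¹)^(k+1)) ^ (p.1+1) * ((Y⁻¹)^(k+1)) ^ (p.2+1)) := by
    intro p
    show (Nat.totient (k+1) : ℝ) *
      ((X⁻¹) ^ ((k+1)*(p.1+1)) * (Y⁻¹) ^ ((k+1)*(p.2+1))) = _
    rw [pow_mul, pow_mul]
  obtain ⟨hPs, hPt⟩ := prod_mul_lemma hu.1 hv.1 (fun a => by positivity) (fun b => by positivity)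
  constructor
  · exact (hPs.mul_left _).congr (fun p => (he p).symm)
  · calc (∑' p : ℕ × ℕ, Ff X Y (k, p))
        = ∑' p : ℕ × ℕ, (Nat.totient (k+1) : ℝ) *
            (((X⁻¹)^(k+1)) ^ (p.1+1) * ((Y⁻¹)^(k+1)) ^ (p.2+1)) := tsum_congr he
      _ = (Nat.totient (k+1) : ℝ) * ∑' p : ℕ × ℕ,
            (((X⁻¹)^(k+1)) ^ (p.1+1) * ((Y⁻¹)^(k+1)) ^ (p.2+1)) := tsum_mul_left
      _ = (Nat.totient (k+1) : ℝ) *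
            ((∑' a : ℕ, ((X⁻¹)^(k+1)) ^ (a+1)) * (∑' b : ℕ, ((Y⁻¹)^(k+1)) ^ (b+1))) := by
            rw [hPt]
      _ = Rf X Y k := by
            rw [hu.2, hv.2, hsval, htval]; rfl

lemma inv_bound {Z : ℝ} (hZ : 1 < Z) (k : ℕ) :
    (Z ^ (k+1) - 1)⁻¹ ≤ (1 - Z⁻¹)⁻¹ * (Z⁻¹)^(k+1) := by
  have hZ0 : (0:ℝ) < Z := lt_trans one_pos hZ
  obtain ⟨hz0, hz1, hZk, -⟩ := aux_facts hZ k
  have hzlt : Z⁻¹ < 1 := inv_lt_one_of_one_lt₀ hZ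
  have h1x : (0:ℝ) < 1 - Z⁻¹ := by linarith
  have hpow : (0:ℝ) < Z ^ (k+1) := by positivity
  have hxk : (1:ℝ) ≤ Z ^ k := one_le_pow₀ hZ.le
  have hmul : Z⁻¹ * Z ^ (k+1) = Z ^ k := by
    rw [pow_succ]
    field_simp
  have key : (1 - Z⁻¹) * Z ^ (k+1) ≤ Z ^ (k+1) - 1 := by nlinarith
  have hposkey : (0:ℝ) < (1 - Z⁻¹) * Z ^ (k+1) := by positivity
  calc (Z ^ (k+1) - 1)⁻¹ ≤ ((1 - Z⁻¹) * Z ^ (k+1))⁻¹ := by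
        exact inv_anti₀ hposkey key
    _ = (1 - Z⁻¹)⁻¹ * (Z⁻¹)^(k+1) := by rw [mul_inv, inv_pow]

lemma Rf_nonneg {X Y : ℝ} (hX : 1 < X) (hY : 1 < Y) (k : ℕ) : 0 ≤ Rf X Y k := by
  obtain ⟨-, -, hXk, -⟩ := aux_facts hX k
  obtain ⟨-, -, hYk, -⟩ := aux_facts hY k
  have h1 := inv_nonneg.mpr hXk.le
  have h2 := inv_nonneg.mpr hYk.le
  unfold Rf
  positivity

lemma Rf_summable {X Y : ℝ} (hX : 1 < X) (hY : 1 < Y) : Summable (Rf X Y) := by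
  have hX0 : (0:ℝ) < X := lt_trans one_pos hX
  have hY0 : (0:ℝ) < Y := lt_trans one_pos hY
  have hx1 : X⁻¹ < 1 := inv_lt_one_of_one_lt₀ hX
  have hy1 : Y⁻¹ < 1 := inv_lt_one_of_one_lt₀ hY
  have hx0 : (0:ℝ) ≤ X⁻¹ := by positivity
  have hy0 : (0:ℝ) ≤ Y⁻¹ := by positivity
  have hxy1 : X⁻¹ * Y⁻¹ < 1 := by nlinarith
  have hbase : Summable (fun k : ℕ => (k+1:ℝ) * (X⁻¹*Y⁻¹)^(k+1)) :=
    geo_coeff (by positivity) hxy1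
  apply Summable.of_nonneg_of_le (Rf_nonneg hX hY) _ (hbase.mul_left ((1-X⁻¹)⁻¹ * (1-Y⁻¹)⁻¹))
  intro k
  obtain ⟨-, -, hXk, -⟩ := aux_facts hX k
  obtain ⟨-, -, hYk, -⟩ := aux_facts hY k
  have hax : (0:ℝ) < 1 - X⁻¹ := by linarith
  have hay : (0:ℝ) < 1 - Y⁻¹ := by linarith
  have h1 := inv_bound hX k
  have h2 := inv_bound hY k
  have htot : (Nat.totient (k+1) : ℝ) ≤ (k+1 : ℝ) := by
    exact_mod_cast Nat.totient_le (k+1)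
  unfold Rf
  calc (Nat.totient (k+1) : ℝ) * ((X ^ (k+1) - 1)⁻¹ * (Y ^ (k+1) - 1)⁻¹)
      ≤ (k+1:ℝ) * (((1-X⁻¹)⁻¹ * (X⁻¹)^(k+1)) * ((1-Y⁻¹)⁻¹ * (Y⁻¹)^(k+1))) := by
        apply mul_le_mul htot _ _ (by positivity)
        · apply mul_le_mul h1 h2 (inv_nonneg.mpr hYk.le) (by positivity)
        · exact mul_nonneg (inv_nonneg.mpr hXk.le) (inv_nonneg.mpr hYk.le)
    _ = (1-X⁻¹)⁻¹ * (1-Y⁻¹)⁻¹ * ((k+1:ℝ) * (X⁻¹*Y⁻¹)^(k+1)) := by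
        rw [mul_pow]
        ring

lemma Ff_nonneg {X Y : ℝ} (hX : 0 < X) (hY : 0 < Y) (t : ℕ × ℕ × ℕ) : 0 ≤ Ff X Y t := by
  unfold Ff
  positivity

lemma Ff_summable {X Y : ℝ} (hX : 1 < X) (hY : 1 < Y) : Summable (Ff X Y) := by
  have hX0 : (0:ℝ) < X := lt_trans one_pos hX
  have hY0 : (0:ℝ) < Y := lt_trans one_pos hY
  have h : Summable (fun q : ℕ × (ℕ × ℕ) => Ff X Y (q.1, q.2)) := by
    rw [summable_prod_of_nonneg (fun q => Ff_nonneg hX0 hY0 _)]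
    constructor
    · intro k
      exact (slice_lemma hX hY k).1
    · apply (Rf_summable hX hY).congr
      intro k
      exact ((slice_lemma hX hY k).2).symm
  exact h.congr (fun q => rfl)

lemma Gf_nonneg {X Y : ℝ} (hX : 0 < X) (hY : 0 < Y) (p : ℕ × ℕ) : 0 ≤ Gf X Y p := by
  unfold Gf
  positivity

lemma Gf_summable {X Y : ℝ} (hX : 1 < X) (hY : 1 < Y) : Summable (Gf X Y) := by
  have hX0 : (0:ℝ) < X := lt_trans one_pos hX
  have hY0 : (0:ℝ) < Y := lt_trans one_pos hY
  have hx1 : X⁻¹ < 1 := inv_lt_one_of_one_lt₀ hX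
  have hy1 : Y⁻¹ < 1 := inv_lt_one_of_one_lt₀ hY
  have hx0 : (0:ℝ) ≤ X⁻¹ := by positivity
  have hy0 : (0:ℝ) ≤ Y⁻¹ := by positivity
  have hu : Summable (fun m : ℕ => (m+1:ℝ) * (X⁻¹)^(m+1)) := geo_coeff hx0 hx1
  have hv : Summable (fun n : ℕ => (Y⁻¹)^(n+1)) := (geo_shift hy0 hy1).1
  have hprod := (prod_mul_lemma hu hv (fun m => by positivity) (fun n => by positivity)).1
  apply Summable.of_nonneg_of_le (Gf_nonneg hX0 hY0) _ hprod
  intro p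
  have hgcd : (Nat.gcd (p.1+1) (p.2+1) : ℝ) ≤ (p.1+1 : ℝ) := by
    exact_mod_cast Nat.le_of_dvd (Nat.succ_pos _) (Nat.gcd_dvd_left _ _)
  unfold Gf
  calc (Nat.gcd (p.1+1) (p.2+1) : ℝ) * ((X⁻¹) ^ (p.1+1) * (Y⁻¹) ^ (p.2+1))
      ≤ ((p.1:ℝ)+1) * ((X⁻¹) ^ (p.1+1) * (Y⁻¹) ^ (p.2+1)) := by
        apply mul_le_mul_of_nonneg_right _ (by positivity)
        push_cast at hgcd ⊢
        exact hgcd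
    _ = (((p.1:ℝ)+1) * (X⁻¹)^(p.1+1)) * (Y⁻¹)^(p.2+1) := by ring

lemma Ff_comp {X Y : ℝ}
    (q : Σ p : ℕ × ℕ, {d : ℕ // d ∈ (Nat.gcd (p.1+1) (p.2+1)).divisors}) :
    Ff X Y (divEquiv q) =
      (Nat.totient (q.2 : ℕ) : ℝ) * ((X⁻¹) ^ (q.1.1+1) * (Y⁻¹) ^ (q.1.2+1)) := by
  obtain ⟨⟨m, n⟩, d, hd⟩ := q
  rw [Nat.mem_divisors] at hd
  obtain ⟨hdvd, hg0⟩ := hd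
  have hd0 : 0 < d := Nat.pos_of_ne_zero (by rintro rfl; exact hg0 (Nat.eq_zero_of_zero_dvd hdvd))
  have hdm : d ∣ m + 1 := hdvd.trans (Nat.gcd_dvd_left _ _)
  have hdn : d ∣ n + 1 := hdvd.trans (Nat.gcd_dvd_right _ _)
  have h1 : d - 1 + 1 = d := Nat.sub_add_cancel hd0
  have hm1 : (m+1)/d - 1 + 1 = (m+1)/d :=
    Nat.sub_add_cancel ((Nat.one_le_div_iff hd0).mpr (Nat.le_of_dvd (Nat.succ_pos m) hdm))
  have hn1 : (n+1)/d - 1 + 1 = (n+1)/d :=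
    Nat.sub_add_cancel ((Nat.one_le_div_iff hd0).mpr (Nat.le_of_dvd (Nat.succ_pos n) hdn))
  show (Nat.totient (d - 1 + 1) : ℝ) *
    ((X⁻¹) ^ ((d - 1 + 1) * ((m+1)/d - 1 + 1)) * (Y⁻¹) ^ ((d - 1 + 1) * ((n+1)/d - 1 + 1))) = _
  rw [h1, hm1, hn1, Nat.mul_div_cancel' hdm, Nat.mul_div_cancel' hdn]

lemma GF_eq {X Y : ℝ} (hX : 1 < X) (hY : 1 < Y) :
    ∑' p : ℕ × ℕ, Gf X Y p = ∑' t : ℕ × ℕ × ℕ, Ff X Y t := by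
  have hFe : Summable ((Ff X Y) ∘ divEquiv) :=
    (Equiv.summable_iff divEquiv).mpr (Ff_summable hX hY)
  calc ∑' p : ℕ × ℕ, Gf X Y p
      = ∑' p : ℕ × ℕ, ∑' d : {d : ℕ // d ∈ (Nat.gcd (p.1+1) (p.2+1)).divisors},
          Ff X Y (divEquiv ⟨p, d⟩) := by
        apply tsum_congr
        intro p
        have h1 : ∀ d : {d : ℕ // d ∈ (Nat.gcd (p.1+1) (p.2+1)).divisors},
            Ff X Y (divEquiv ⟨p, d⟩) =
            (Nat.totient (d : ℕ) : ℝ) * ((X⁻¹) ^ (p.1+1) * (Y⁻¹) ^ (p.2+1)) :=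
          fun d => Ff_comp ⟨p, d⟩
        rw [tsum_congr h1]
        rw [Finset.tsum_subtype ((Nat.gcd (p.1+1) (p.2+1)).divisors)
          (fun d => (Nat.totient d : ℝ) * ((X⁻¹) ^ (p.1+1) * (Y⁻¹) ^ (p.2+1)))]
        rw [← Finset.sum_mul, ← Nat.cast_sum]
        rw [Nat.sum_totient]
        rfl
    _ = ∑' q : (Σ p : ℕ × ℕ, {d : ℕ // d ∈ (Nat.gcd (p.1+1) (p.2+1)).divisors}),
          Ff X Y (divEquiv q) := (Summable.tsum_sigma hFe).symm
    _ = ∑' t : ℕ × ℕ × ℕ, Ff X Y t := Equiv.tsum_eq divEquiv (Ff X Y)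

lemma FR_eq {X Y : ℝ} (hX : 1 < X) (hY : 1 < Y) :
    ∑' t : ℕ × ℕ × ℕ, Ff X Y t = ∑' k : ℕ, Rf X Y k := by
  have hF : Summable (fun q : ℕ × (ℕ × ℕ) => Ff X Y (q.1, q.2)) :=
    (Ff_summable hX hY).congr (fun q => rfl)
  have := Summable.tsum_prod' hF (fun k => ((slice_lemma hX hY k).1.congr (fun p => rfl)))
  calc ∑' t : ℕ × ℕ × ℕ, Ff X Y t
      = ∑' (k : ℕ) (p : ℕ × ℕ), Ff X Y ((k, p).1, (k, p).2) := this
    _ = ∑' k : ℕ, Rf X Y k := tsum_congr fun k => (slice_lemma hX hY k).2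

theorem stmt_8 (X Y : ℝ) (hX : 1 < X) (hY : 1 < Y) :
    Summable (fun p : ℕ × ℕ =>
        (Nat.gcd (p.1 + 1) (p.2 + 1) : ℝ) / (X ^ (p.1 + 1) * Y ^ (p.2 + 1))) ∧
    Summable (fun k : ℕ =>
        (Nat.totient (k + 1) : ℝ) / ((X ^ (k + 1) - 1) * (Y ^ (k + 1) - 1))) ∧
    ∑' p : ℕ × ℕ, (Nat.gcd (p.1 + 1) (p.2 + 1) : ℝ) / (X ^ (p.1 + 1) * Y ^ (p.2 + 1)) =
      ∑' k : ℕ, (Nat.totient (k + 1) : ℝ) / ((X ^ (k + 1) - 1) * (Y ^ (k + 1) - 1)) := by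
  have hGstmt : (fun p : ℕ × ℕ =>
      (Nat.gcd (p.1 + 1) (p.2 + 1) : ℝ) / (X ^ (p.1 + 1) * Y ^ (p.2 + 1))) = Gf X Y := by
    funext p
    unfold Gf
    rw [div_eq_mul_inv, mul_inv, ← inv_pow, ← inv_pow]
  have hRstmt : (fun k : ℕ =>
      (Nat.totient (k + 1) : ℝ) / ((X ^ (k + 1) - 1) * (Y ^ (k + 1) - 1))) = Rf X Y := by
    funext k
    unfold Rf
    rw [div_eq_mul_inv, mul_inv]
  refine ⟨?_, ?_, ?_⟩
  · rw [hGstmt]; exact Gf_summable hX hY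
  · rw [hRstmt]; exact Rf_summable hX hY
  · rw [hGstmt, hRstmt]
    rw [GF_eq hX hY, FR_eq hX hY]
end

section
/- Let a : ℕ → ℂ be a sequence such that for every N ∈ ℕ there exist infinitely many m ∈ ℕ such that |a(m)| > N·|a(m+j)| for every integer j with 1 ≤ |j| ≤ N. Then there are no polynomials p_0, …, p_N ∈ ℂ[t], not all zero, with ∑_{k=0}^{N} p_k(n)·a(n+k) = 0 for all n ∈ ℕ. -/
open Filter Polynomial Finset Topology

lemma aux_tendsto (P : ℂ[X]) :
    Tendsto (fun n : ℕ => P.eval (n : ℂ) / (n : ℂ) ^ P.natDegree) atTop (𝓝 P.leadingCoeff) := by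
  have h1 : ∀ n : ℕ, P.eval (n:ℂ) / (n:ℂ)^P.natDegree
      = ∑ i ∈ range (P.natDegree + 1), P.coeff i * (n:ℂ)^i / (n:ℂ)^P.natDegree := by
    intro n
    rw [Polynomial.eval_eq_sum_range, Finset.sum_div]
  simp_rw [h1]
  have h2 : P.leadingCoeff = ∑ i ∈ range (P.natDegree + 1),
      (if i = P.natDegree then P.leadingCoeff else 0) := by simp
  rw [h2]
  apply tendsto_finset_sum
  intro i hi
  rcases eq_or_lt_of_le (Nat.lt_succ_iff.mp (mem_range.mp hi)) with h | h
  · simp only [if_pos h]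
    apply Tendsto.congr' (f₁ := fun _ : ℕ => P.leadingCoeff)
    · filter_upwards [eventually_ge_atTop 1] with n hn
      have : (n:ℂ) ≠ 0 := Nat.cast_ne_zero.mpr (by omega)
      rw [h, Polynomial.leadingCoeff, mul_div_assoc, div_self (pow_ne_zero _ this), mul_one]
    · exact tendsto_const_nhds
  · have hz : Tendsto (fun n : ℕ => ((n:ℂ))⁻¹) atTop (𝓝 0) := by
      rw [tendsto_zero_iff_norm_tendsto_zero]
      simp only [norm_inv, Complex.norm_natCast]
      exact tendsto_inv_atTop_zero.comp tendsto_natCast_atTop_atTop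
    simp only [if_neg h.ne]
    apply Tendsto.congr' (f₁ := fun n : ℕ => P.coeff i * ((n:ℂ)⁻¹)^(P.natDegree - i))
    · filter_upwards [eventually_ge_atTop 1] with n hn
      have hne : (n:ℂ) ≠ 0 := Nat.cast_ne_zero.mpr (by omega)
      rw [mul_div_assoc, inv_pow, ← div_eq_mul_inv]
      have hp : (n:ℂ)^i * (n:ℂ)^(P.natDegree - i) = (n:ℂ)^P.natDegree := by
        rw [← pow_add]; congr 1; omega
      field_simp
      linear_combination -P.coeff i * hp
    · have : (0:ℂ) = P.coeff i * 0 ^ (P.natDegree - i) := by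
        rw [zero_pow (by omega), mul_zero]
      rw [this]
      exact (tendsto_const_nhds.mul (hz.pow _))

lemma aux_abs (P : ℂ[X]) :
    Tendsto (fun n : ℕ => ‖P.eval (n : ℂ)‖ / (n : ℝ) ^ P.natDegree) atTop
      (𝓝 (‖P.leadingCoeff‖)) := by
  have h := (continuous_norm.tendsto _).comp (aux_tendsto P)
  refine h.congr fun n => ?_
  simp [Function.comp, norm_div, norm_pow, Complex.norm_natCast]

theorem stmt_12 (a : ℕ → ℂ)
    (ha : ∀ N : ℕ, {m : ℕ | ∀ j : ℤ, 1 ≤ |j| → |j| ≤ N → 0 ≤ (m : ℤ) + j →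
        (N : ℝ) * ‖a ((m : ℤ) + j).toNat‖ < ‖a m‖}.Infinite) :
    ¬ ∃ (N : ℕ) (p : ℕ → Polynomial ℂ),
        (∃ k ≤ N, p k ≠ 0) ∧
        ∀ n : ℕ, ∑ k ∈ Finset.range (N + 1), (p k).eval (n : ℂ) * a (n + k) = 0 := by
  rintro ⟨N, p, ⟨k1, hk1N, hk1⟩, hrec⟩
  classical
  set S : Finset ℕ := (Finset.range (N+1)).filter (fun k => p k ≠ 0) with hS
  have hSne : S.Nonempty :=
    ⟨k1, by simp only [hS, Finset.mem_filter, Finset.mem_range]; exact ⟨by omega, hk1⟩⟩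
  obtain ⟨k0, hk0S, hk0max⟩ := S.exists_max_image (fun k => (p k).natDegree) hSne
  have hk0N : k0 ≤ N := by
    have := (Finset.mem_filter.mp hk0S).1; simp only [Finset.mem_range] at this; omega
  have hpk0 : p k0 ≠ 0 := (Finset.mem_filter.mp hk0S).2
  set d := (p k0).natDegree with hd
  set L := ‖(p k0).leadingCoeff‖ with hLdef
  have hL : 0 < L := by
    rw [hLdef]
    exact norm_pos_iff.mpr (Polynomial.leadingCoeff_ne_zero.mpr hpk0)
  have hdeg : ∀ k, k ∈ Finset.range (N+1) → (p k).natDegree ≤ d := by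
    intro k hk
    by_cases h : p k = 0
    · simp [h]
    · exact hk0max k (Finset.mem_filter.mpr ⟨hk, h⟩)
  -- eventual upper bounds
  have hup : ∀ k ∈ Finset.range (N+1), ∀ᶠ n : ℕ in atTop,
      ‖(p k).eval (n:ℂ)‖ ≤ (‖(p k).leadingCoeff‖ + 1) * (n:ℝ)^d := by
    intro k hk
    have h1 := (aux_abs (p k)).eventually
      (eventually_le_nhds (lt_add_one (‖(p k).leadingCoeff‖)))
    filter_upwards [h1, eventually_ge_atTop 1] with n hr hn
    have hn1 : (1:ℝ) ≤ (n:ℝ) := by exact_mod_cast hn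
    have hx : (0:ℝ) < (n:ℝ)^(p k).natDegree := by positivity
    rw [div_le_iff₀ hx] at hr
    calc ‖(p k).eval (n:ℂ)‖
        ≤ (‖(p k).leadingCoeff‖ + 1) * (n:ℝ)^(p k).natDegree := hr
      _ ≤ (‖(p k).leadingCoeff‖ + 1) * (n:ℝ)^d :=
          mul_le_mul_of_nonneg_left (pow_le_pow_right₀ hn1 (hdeg k hk)) (by positivity)
  -- eventual lower bound
  have hlow : ∀ᶠ n : ℕ in atTop, (L/2) * (n:ℝ)^d ≤ ‖(p k0).eval (n:ℂ)‖ := by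
    have h2 := (aux_abs (p k0)).eventually (eventually_ge_nhds (by linarith : L/2 < L))
    filter_upwards [h2, eventually_ge_atTop 1] with n hr hn
    have hx : (0:ℝ) < (n:ℝ)^d := by positivity
    rw [← hd, le_div_iff₀ hx] at hr
    linarith
  have hall := ((Filter.eventually_all_finset (Finset.range (N+1))).2 hup).and hlow
  obtain ⟨n₀, hn₀⟩ := Filter.eventually_atTop.mp hall
  set C : ℝ := ∑ k ∈ Finset.range (N+1), (‖(p k).leadingCoeff‖ + 1) with hC
  have hC0 : 0 ≤ C := Finset.sum_nonneg fun k _ => by positivity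
  obtain ⟨N', hN'N, hN'ceil⟩ : ∃ N' : ℕ, N ≤ N' ∧ ⌈2*C/L⌉₊ + 1 ≤ N' :=
    ⟨max (⌈2*C/L⌉₊ + 1) N, le_max_right _ _, le_max_left _ _⟩
  have hN'1 : 1 ≤ N' := by omega
  have h2C : 2*C < (N':ℝ) * L := by
    have h1 : 2*C/L < ((⌈2*C/L⌉₊ : ℝ) + 1) := lt_of_le_of_lt (Nat.le_ceil _) (lt_add_one _)
    have h2 : ((⌈2*C/L⌉₊ + 1 : ℕ) : ℝ) ≤ (N' : ℝ) := by exact_mod_cast hN'ceil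
    push_cast at h2
    rw [div_lt_iff₀ hL] at h1
    nlinarith
  have hM : (0:ℝ) < N' := by exact_mod_cast hN'1
  obtain ⟨m, hmS, hmgt⟩ := (ha N').exists_gt (n₀ + N + 1)
  simp only [Set.mem_setOf_eq] at hmS
  set n : ℕ := m - k0 with hn
  have hnk0 : n + k0 = m := by omega
  have hnn₀ : n₀ ≤ n := by omega
  have hn1 : 1 ≤ n := by omega
  -- a m is nonzero
  have h0 : 0 < ‖a m‖ := by
    have h1 := hmS 1 (by norm_num) (by rw [abs_one]; exact_mod_cast hN'1) (by omega)
    have h2 : (0:ℝ) ≤ (N':ℝ) * ‖a ((m:ℤ) + 1).toNat‖ := by positivity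
    linarith
  -- neighbours are small
  have hsmall : ∀ k ∈ Finset.range (N+1), k ≠ k0 →
      ‖a (n+k)‖ ≤ ‖a m‖ / N' := by
    intro k hk hkne
    have hkN : k ≤ N := by have := Finset.mem_range.mp hk; omega
    have hj0 : ((k:ℤ) - k0) ≠ 0 := by omega
    have hj1 : (1:ℤ) ≤ |(k:ℤ) - k0| := Int.one_le_abs hj0
    have hj2 : |(k:ℤ) - k0| ≤ (N':ℤ) := by rw [abs_le]; omega
    have hj3 : (0:ℤ) ≤ (m:ℤ) + ((k:ℤ) - k0) := by omega
    have h1 := hmS ((k:ℤ) - k0) hj1 hj2 hj3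
    have heq : ((m:ℤ) + ((k:ℤ) - k0)).toNat = n + k := by omega
    rw [heq] at h1
    rw [le_div_iff₀ hM]
    linarith
  -- main chain
  have hsum := hrec n
  rw [← Finset.add_sum_erase _ _ (Finset.mem_range.mpr (by omega : k0 < N+1))] at hsum
  have heqq : (p k0).eval (n:ℂ) * a (n + k0)
      = -∑ k ∈ (Finset.range (N+1)).erase k0, (p k).eval (n:ℂ) * a (n+k) :=
    eq_neg_of_add_eq_zero_left hsum
  set A := ‖a m‖ with hA
  set X := ((n:ℝ))^d with hX
  have hXpos : 0 < X := by rw [hX]; positivity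
  have hchain : (L/2) * X * A ≤ C * (X * (A/N')) := by
    have e1 : ‖(p k0).eval (n:ℂ)‖ * A
        = ‖∑ k ∈ (Finset.range (N+1)).erase k0, (p k).eval (n:ℂ) * a (n+k)‖ := by
      rw [hA, ← hnk0, ← norm_mul, heqq, norm_neg]
    have e2 : ‖∑ k ∈ (Finset.range (N+1)).erase k0, (p k).eval (n:ℂ) * a (n+k)‖
        ≤ ∑ k ∈ (Finset.range (N+1)).erase k0,
            (‖(p k).leadingCoeff‖ + 1) * (X * (A/N')) := by
      refine le_trans (norm_sum_le _ _) (Finset.sum_le_sum ?_)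
      intro k hk
      have hk' : k ∈ Finset.range (N+1) := Finset.mem_of_mem_erase hk
      have hkne : k ≠ k0 := Finset.ne_of_mem_erase hk
      rw [norm_mul]
      have b1 := (hn₀ n hnn₀).1 k hk'
      have b2 := hsmall k hk' hkne
      calc ‖(p k).eval (n:ℂ)‖ * ‖a (n+k)‖
          ≤ ((‖(p k).leadingCoeff‖ + 1) * X) * (A / N') := by
            apply mul_le_mul b1 b2 (by positivity) (by positivity)
        _ = (‖(p k).leadingCoeff‖ + 1) * (X * (A/N')) := by ring
    have e3 : ∑ k ∈ (Finset.range (N+1)).erase k0,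
          (‖(p k).leadingCoeff‖ + 1) * (X * (A/N')) ≤ C * (X * (A/N')) := by
      rw [← Finset.sum_mul, hC]
      apply mul_le_mul_of_nonneg_right _ (by positivity)
      exact Finset.sum_le_sum_of_subset_of_nonneg (Finset.erase_subset _ _)
        (fun k _ _ => by positivity)
    have e4 : (L/2) * X * A ≤ ‖(p k0).eval (n:ℂ)‖ * A :=
      mul_le_mul_of_nonneg_right (hn₀ n hnn₀).2 (le_of_lt h0)
    calc (L/2) * X * A ≤ ‖(p k0).eval (n:ℂ)‖ * A := e4
      _ = _ := e1
      _ ≤ _ := e2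
      _ ≤ _ := e3
  have hchain' : (L/2) * X * A * N' ≤ C * X * A := by
    have : C * (X * (A/N')) = C * X * A / N' := by ring
    rw [this] at hchain
    exact (le_div_iff₀ hM).mp hchain
  nlinarith [mul_lt_mul_of_pos_right h2C (mul_pos hXpos h0), hchain', mul_pos hXpos h0]
end
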